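/- arXiv:2402.14773 — 3 statements merged into one kernel-verified Lean document; each statement's English description precedes it below -/
import Mathlib

section
/- In dimension d = 3, for four positive frequencies ω_0, ω_1, ω_2, ω_3, the interaction integral I(ω_0, ω_1, ω_2, ω_3) = 4π ∫_0^∞ q² ∏_{j=0}^3 (sin(√ω_j q)/(√ω_j q)) dq converges (as an improper integral) and is nonnegative whenever √ω_0 is the largest of the √ω_j and √ω_0 ≤ √ω_1 + √ω_2 + √ω_3. -/
open MeasureTheory Real Filter
open Set


noncomputable def Fc (t : ℝ) : ℝ → ℝ := fun q => (1 - Real.cos (t * q)) / q ^ 2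

lemma Fc_meas (t : ℝ) : Measurable (Fc t) :=
  (measurable_const.sub (Real.measurable_cos.comp (measurable_const_mul t))).div
    (measurable_id.pow_const 2)

lemma Fc_nonneg (t q : ℝ) : 0 ≤ Fc t q :=
  div_nonneg (by nlinarith [Real.cos_le_one (t * q)]) (sq_nonneg q)

lemma aux_one_sub_cos_le (x : ℝ) : 1 - Real.cos x ≤ x ^ 2 / 2 := by
  have h1 : Real.cos (x / 2) ^ 2 = 1 / 2 + Real.cos (2 * (x / 2)) / 2 := Real.cos_sq (x / 2)
  have h2 : Real.sin (x / 2) ^ 2 + Real.cos (x / 2) ^ 2 = 1 := Real.sin_sq_add_cos_sq _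
  have h4 : Real.sin (x / 2) ^ 2 ≤ (x / 2) ^ 2 := by
    nlinarith [Real.abs_sin_le_abs (x := x / 2), sq_abs (Real.sin (x / 2)), sq_abs (x / 2),
      abs_nonneg (Real.sin (x/2)), abs_nonneg (x/2)]
  have h5 : 2 * (x / 2) = x := by ring
  rw [h5] at h1
  nlinarith

lemma Fc_integrable (t : ℝ) : IntegrableOn (Fc t) (Ioi 0) := by
  have h01 : IntegrableOn (Fc t) (Ioc 0 1) := by
    apply Measure.integrableOn_of_bounded (M := t ^ 2 / 2) measure_Ioc_lt_top.ne
      (Fc_meas t).aestronglyMeasurable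
    filter_upwards [ae_restrict_mem measurableSet_Ioc] with q hq
    have hq0 : 0 < q := hq.1
    rw [Real.norm_eq_abs, abs_of_nonneg (Fc_nonneg t q)]
    unfold Fc
    rw [div_le_iff₀ (by positivity)]
    calc 1 - Real.cos (t * q) ≤ (t * q) ^ 2 / 2 := aux_one_sub_cos_le _
      _ ≤ t ^ 2 / 2 * q ^ 2 := by nlinarith
  have h1i : IntegrableOn (Fc t) (Ioi 1) := by
    have hg : IntegrableOn (fun q : ℝ => 2 * q ^ (-2 : ℝ)) (Ioi 1) :=
      (integrableOn_Ioi_rpow_of_lt (by norm_num) one_pos).const_mul 2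
    apply hg.integrable.mono' (Fc_meas t).aestronglyMeasurable
    filter_upwards [ae_restrict_mem measurableSet_Ioi] with q hq
    have hq1 : (1:ℝ) < q := hq
    have hq0 : (0:ℝ) < q := lt_trans one_pos hq1
    rw [Real.norm_eq_abs, abs_of_nonneg (Fc_nonneg t q)]
    have hpow : q ^ (-2 : ℝ) = (q ^ 2)⁻¹ := by
      rw [show (-2 : ℝ) = -(2:ℕ) by norm_num, Real.rpow_neg hq0.le, Real.rpow_natCast]
    rw [hpow]
    unfold Fc
    rw [div_eq_mul_inv]
    gcongr
    nlinarith [Real.neg_one_le_cos (t * q)]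
  have hu : Ioc (0:ℝ) 1 ∪ Ioi 1 = Ioi 0 := Ioc_union_Ioi_eq_Ioi zero_le_one
  rw [← hu]
  exact h01.union h1i

noncomputable def Jc (t : ℝ) : ℝ := ∫ q in Ioi (0:ℝ), Fc t q

lemma Jc_nonneg (t : ℝ) : 0 ≤ Jc t :=
  setIntegral_nonneg measurableSet_Ioi fun q _ => Fc_nonneg t q

lemma Jc_scale (t : ℝ) (ht : 0 < t) : Jc t = t * Jc 1 := by
  have key : ∀ q ∈ Ioi (0:ℝ), Fc t q = t ^ 2 * Fc 1 (t * q) := by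
    intro q hq
    have hq0 : (0:ℝ) < q := hq
    unfold Fc
    rw [one_mul]
    field_simp
  have h1 : Jc t = ∫ q in Ioi (0:ℝ), t ^ 2 * Fc 1 (t * q) :=
    setIntegral_congr_fun measurableSet_Ioi key
  rw [h1, MeasureTheory.integral_const_mul,
    MeasureTheory.integral_comp_mul_left_Ioi (Fc 1) 0 ht, mul_zero, smul_eq_mul,
    show (∫ q in Ioi (0:ℝ), Fc 1 q) = Jc 1 from rfl]
  field_simp

lemma Jc_abs (t : ℝ) : Jc t = |t| * Jc 1 := by
  rcases lt_trichotomy t 0 with h | h | h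
  · have : Fc t = Fc (-t) := by
      funext q; unfold Fc; rw [show t * q = -(-t * q) by ring, Real.cos_neg]
    rw [show Jc t = Jc (-t) by rw [Jc, Jc, this], Jc_scale (-t) (by linarith), abs_of_neg h]
  · subst h
    have : Fc 0 = fun _ => 0 := by funext q; unfold Fc; simp
    rw [show Jc 0 = 0 by rw [Jc, this]; simp]
    simp
  · rw [Jc_scale t h, abs_of_pos h]
set_option maxHeartbeats 2000000 in
lemma aux_S (a0 a1 a2 a3 : ℝ) (h1 : a1 ≤ a0) (h2 : a2 ≤ a0) (h3 : a3 ≤ a0)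
    (hp1 : 0 < a1) (hp2 : 0 < a2) (hp3 : 0 < a3) (htri : a0 ≤ a1 + a2 + a3) :
    0 ≤ |a0+a1+a2-a3| + |a0+a1-a2+a3| + |a0-a1+a2+a3| + |a0-a1-a2-a3|
      - |a0+a1+a2+a3| - |a0+a1-a2-a3| - |a0-a1+a2-a3| - |a0-a1-a2+a3| := by
  rw [abs_of_pos (by linarith : (0:ℝ) < a0+a1+a2+a3),
      abs_of_nonpos (by linarith : a0-a1-a2-a3 ≤ 0),
      abs_of_pos (by linarith : (0:ℝ) < a0+a1+a2-a3),
      abs_of_pos (by linarith : (0:ℝ) < a0+a1-a2+a3),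
      abs_of_pos (by linarith : (0:ℝ) < a0-a1+a2+a3)]
  rcases abs_cases (a0+a1-a2-a3) with ⟨e6,_⟩|⟨e6,_⟩ <;>
  rcases abs_cases (a0-a1+a2-a3) with ⟨e7,_⟩|⟨e7,_⟩ <;>
  rcases abs_cases (a0-a1-a2+a3) with ⟨e8,_⟩|⟨e8,_⟩ <;>
  linarith

/-- in `d = 3`, the interaction integral
`I(ω_0,ω_1,ω_2,ω_3) = 4π ∫_0^∞ q² ∏_j sin(√ω_j q)/(√ω_j q) dq` converges as an improper
integral and is nonnegative when `√ω_0` is the largest and `√ω_0 ≤ √ω_1 + √ω_2 + √ω_3`. -/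
theorem interaction_integral_d3_converges_nonneg (ω : Fin 4 → ℝ)
    (hω : ∀ j, 0 < ω j)
    (hmax : ∀ j, Real.sqrt (ω j) ≤ Real.sqrt (ω 0))
    (htri : Real.sqrt (ω 0) ≤ Real.sqrt (ω 1) + Real.sqrt (ω 2) + Real.sqrt (ω 3)) :
    ∃ I : ℝ,
      Tendsto (fun R : ℝ => ∫ q in (0 : ℝ)..R,
          4 * π * q ^ 2 * ∏ j, Real.sin (Real.sqrt (ω j) * q) / (Real.sqrt (ω j) * q))
        atTop (nhds I) ∧ 0 ≤ I := by
  set a0 := Real.sqrt (ω 0) with ha0d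
  set a1 := Real.sqrt (ω 1) with ha1d
  set a2 := Real.sqrt (ω 2) with ha2d
  set a3 := Real.sqrt (ω 3) with ha3d
  have hp0 : 0 < a0 := Real.sqrt_pos.mpr (hω 0)
  have hp1 : 0 < a1 := Real.sqrt_pos.mpr (hω 1)
  have hp2 : 0 < a2 := Real.sqrt_pos.mpr (hω 2)
  have hp3 : 0 < a3 := Real.sqrt_pos.mpr (hω 3)
  set c : ℝ := π / (2 * (a0 * a1 * a2 * a3)) with hcd
  have hc : 0 ≤ c := by positivity
  set f : ℝ → ℝ := fun q =>
      4 * π * q ^ 2 * ∏ j, Real.sin (Real.sqrt (ω j) * q) / (Real.sqrt (ω j) * q) with hfd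
  set g : ℝ → ℝ := fun q => c *
      (Fc (a0+a1+a2-a3) q + Fc (a0+a1-a2+a3) q + Fc (a0-a1+a2+a3) q + Fc (a0-a1-a2-a3) q
        - Fc (a0+a1+a2+a3) q - Fc (a0+a1-a2-a3) q - Fc (a0-a1+a2-a3) q - Fc (a0-a1-a2+a3) q)
    with hgd
  have hEq : ∀ q ∈ Ioi (0:ℝ), f q = g q := by
    intro q hq
    have hq0 : (0:ℝ) < q := hq
    have hqne : q ≠ 0 := ne_of_gt hq0
    simp only [hfd, hgd, Fin.prod_univ_four]
    unfold Fc
    rw [show (a0+a1+a2-a3) * q = a0*q + a1*q + a2*q - a3*q by ring,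
        show (a0+a1-a2+a3) * q = a0*q + a1*q - a2*q + a3*q by ring,
        show (a0-a1+a2+a3) * q = a0*q - a1*q + a2*q + a3*q by ring,
        show (a0-a1-a2-a3) * q = a0*q - a1*q - a2*q - a3*q by ring,
        show (a0+a1+a2+a3) * q = a0*q + a1*q + a2*q + a3*q by ring,
        show (a0+a1-a2-a3) * q = a0*q + a1*q - a2*q - a3*q by ring,
        show (a0-a1+a2-a3) * q = a0*q - a1*q + a2*q - a3*q by ring,
        show (a0-a1-a2+a3) * q = a0*q - a1*q - a2*q + a3*q by ring]
    simp only [Real.cos_add, Real.cos_sub, Real.sin_add, Real.sin_sub]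
    rw [← ha0d, ← ha1d, ← ha2d, ← ha3d, hcd]
    field_simp
    ring
  have i1 := Fc_integrable (a0+a1+a2-a3)
  have i2 := Fc_integrable (a0+a1-a2+a3)
  have i3 := Fc_integrable (a0-a1+a2+a3)
  have i4 := Fc_integrable (a0-a1-a2-a3)
  have i5 := Fc_integrable (a0+a1+a2+a3)
  have i6 := Fc_integrable (a0+a1-a2-a3)
  have i7 := Fc_integrable (a0-a1+a2-a3)
  have i8 := Fc_integrable (a0-a1-a2+a3)
  have hg_int : IntegrableOn g (Ioi 0) :=
    ((((((((i1.add i2).add i3).add i4).sub i5).sub i6).sub i7).sub i8).const_mul c)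
  have hf_int : IntegrableOn f (Ioi 0) :=
    hg_int.congr_fun (fun q hq => (hEq q hq).symm) measurableSet_Ioi
  refine ⟨∫ q in Ioi (0:ℝ), f q,
    intervalIntegral_tendsto_integral_Ioi 0 hf_int tendsto_id, ?_⟩
  have hval : ∫ q in Ioi (0:ℝ), f q = ∫ q in Ioi (0:ℝ), g q :=
    setIntegral_congr_fun measurableSet_Ioi hEq
  rw [hval, hgd]
  rw [MeasureTheory.integral_const_mul]
  have e2 : Integrable (fun q => Fc (a0+a1+a2-a3) q + Fc (a0+a1-a2+a3) q)
      (volume.restrict (Ioi 0)) := by exact i1.add i2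
  have e3 : Integrable (fun q => Fc (a0+a1+a2-a3) q + Fc (a0+a1-a2+a3) q + Fc (a0-a1+a2+a3) q)
      (volume.restrict (Ioi 0)) := by exact (i1.add i2).add i3
  have e4 : Integrable (fun q => Fc (a0+a1+a2-a3) q + Fc (a0+a1-a2+a3) q + Fc (a0-a1+a2+a3) q
      + Fc (a0-a1-a2-a3) q) (volume.restrict (Ioi 0)) := by exact ((i1.add i2).add i3).add i4
  have e5 : Integrable (fun q => Fc (a0+a1+a2-a3) q + Fc (a0+a1-a2+a3) q + Fc (a0-a1+a2+a3) q
      + Fc (a0-a1-a2-a3) q - Fc (a0+a1+a2+a3) q) (volume.restrict (Ioi 0)) := by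
    exact (((i1.add i2).add i3).add i4).sub i5
  have e6 : Integrable (fun q => Fc (a0+a1+a2-a3) q + Fc (a0+a1-a2+a3) q + Fc (a0-a1+a2+a3) q
      + Fc (a0-a1-a2-a3) q - Fc (a0+a1+a2+a3) q - Fc (a0+a1-a2-a3) q)
      (volume.restrict (Ioi 0)) := by exact ((((i1.add i2).add i3).add i4).sub i5).sub i6
  have e7 : Integrable (fun q => Fc (a0+a1+a2-a3) q + Fc (a0+a1-a2+a3) q + Fc (a0-a1+a2+a3) q
      + Fc (a0-a1-a2-a3) q - Fc (a0+a1+a2+a3) q - Fc (a0+a1-a2-a3) q - Fc (a0-a1+a2-a3) q)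
      (volume.restrict (Ioi 0)) := by exact (((((i1.add i2).add i3).add i4).sub i5).sub i6).sub i7
  rw [integral_sub e7 i8, integral_sub e6 i7, integral_sub e5 i6, integral_sub e4 i5,
      integral_add e3 i4, integral_add e2 i3, integral_add i1 i2]
  have hJ : ∀ t : ℝ, (∫ q in Ioi (0:ℝ), Fc t q) = |t| * Jc 1 := fun t => Jc_abs t
  rw [hJ, hJ, hJ, hJ, hJ, hJ, hJ, hJ]
  have hS : 0 ≤ |a0+a1+a2-a3| + |a0+a1-a2+a3| + |a0-a1+a2+a3| + |a0-a1-a2-a3|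
      - |a0+a1+a2+a3| - |a0+a1-a2-a3| - |a0-a1+a2-a3| - |a0-a1-a2+a3| :=
    aux_S a0 a1 a2 a3 (hmax 1) (hmax 2) (hmax 3) hp1 hp2 hp3 htri
  have hJ1 : 0 ≤ Jc 1 := Jc_nonneg 1
  have : |a0+a1+a2-a3| * Jc 1 + |a0+a1-a2+a3| * Jc 1 + |a0-a1+a2+a3| * Jc 1
      + |a0-a1-a2-a3| * Jc 1 - |a0+a1+a2+a3| * Jc 1 - |a0+a1-a2-a3| * Jc 1
      - |a0-a1+a2-a3| * Jc 1 - |a0-a1-a2+a3| * Jc 1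
      = (|a0+a1+a2-a3| + |a0+a1-a2+a3| + |a0-a1+a2+a3| + |a0-a1-a2-a3|
        - |a0+a1+a2+a3| - |a0+a1-a2-a3| - |a0-a1+a2-a3| - |a0-a1-a2+a3|) * Jc 1 := by ring
  rw [this]
  exact mul_nonneg hc (mul_nonneg hS hJ1)
end

section
/- For a function χ ∈ C_c(ℝ_+) and a sequence λ_n ~ 4π(C n)^{2/d} (n → ∞) with C > 0, the Riemann-sum limit holds: L^{-d} Σ_n χ(λ_n/L²) → (d/(2C(4π)^{d/2})) ∫_0^∞ ω^{d/2−1} χ(ω) dω as L → ∞. -/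
set_option maxHeartbeats 1000000


open MeasureTheory Real Filter

/-- Riemann-sum limit. For continuous `χ` compactly supported in `(0,∞)`
and `λ_n ~ 4π (C n)^{2/d}`, we have
`L^{-d} Σ_n χ(λ_n/L²) → (d/(2C(4π)^{d/2})) ∫_0^∞ ω^{d/2−1} χ(ω) dω` as `L → ∞`. -/
theorem riemann_sum_limit (d : ℕ) (hd : 1 ≤ d) (C : ℝ) (hC : 0 < C)
    (χ : ℝ → ℝ) (hχc : Continuous χ) (hχs : HasCompactSupport χ)
    (hχsupp : tsupport χ ⊆ Set.Ioi (0 : ℝ))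
    (lam : ℕ → ℝ) (hlam0 : ∀ n, 0 ≤ lam n) (hmono : Monotone lam)
    (hasymp : Tendsto (fun n : ℕ => lam n / (4 * π * (C * n) ^ (2 / (d : ℝ))))
      atTop (nhds 1)) :
    Tendsto (fun L : ℝ => (∑' n : ℕ, χ (lam n / L ^ 2)) / L ^ d)
      atTop (nhds (((d : ℝ) / (2 * C * (4 * π) ^ ((d : ℝ) / 2))) *
        ∫ ω in Set.Ioi (0 : ℝ), ω ^ ((d : ℝ) / 2 - 1) * χ ω)) := by
  have hdR : (0:ℝ) < (d:ℝ) := by exact_mod_cast hd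
  have hπ4 : (0:ℝ) < 4 * π := by positivity
  set e : ℝ := 2 / (d : ℝ) with he_def
  have he : (0:ℝ) < e := by positivity
  set φ : ℝ → ℝ := fun t => 4 * π * (C * t) ^ e with hφ_def
  have hφcont : Continuous φ := by
    exact continuous_const.mul ((Real.continuous_rpow_const he.le).comp
      (continuous_const.mul continuous_id))
  have hφ0 : φ 0 = 0 := by
    simp [hφ_def, Real.zero_rpow he.ne']
  have hφmono : ∀ {s t : ℝ}, 0 ≤ s → s ≤ t → φ s ≤ φ t := by
    intro s t hs hst
    have h1 : (C * s) ^ e ≤ (C * t) ^ e :=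
      Real.rpow_le_rpow (by positivity) (by nlinarith) he.le
    simp only [hφ_def]
    nlinarith
  have hφpos : ∀ {t : ℝ}, 0 < t → 0 < φ t := by
    intro t ht
    have : (0:ℝ) < (C * t) ^ e := Real.rpow_pos_of_pos (by positivity) e
    simp only [hφ_def]; positivity
  have hφnonneg : ∀ t : ℝ, 0 ≤ t → 0 ≤ φ t := by
    intro t ht
    rcases eq_or_lt_of_le ht with h | h
    · rw [← h, hφ0]
    · exact (hφpos h).le
  have hφtop : Tendsto φ atTop atTop := by
    have h1 : Tendsto (fun t : ℝ => C * t) atTop atTop :=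
      tendsto_id.const_mul_atTop hC
    have h2 : Tendsto (fun t : ℝ => (C * t) ^ e) atTop atTop :=
      (tendsto_rpow_atTop he).comp h1
    exact h2.const_mul_atTop hπ4
  set g : ℝ → ℝ := fun t => χ (φ t) with hg_def
  have hgcont : Continuous g := hχc.comp hφcont
  -- support bounds
  obtain ⟨a, b, ha, hab, hsupp⟩ :
      ∃ a b : ℝ, 0 < a ∧ a ≤ b ∧ ∀ x, x ∉ Set.Icc a b → χ x = 0 := by
    by_cases hne : (tsupport χ).Nonempty
    · refine ⟨sInf (tsupport χ), sSup (tsupport χ), hχsupp (hχs.sInf_mem hne), ?_, ?_⟩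
      · exact csInf_le_csSup hne hχs.bddBelow hχs.bddAbove
      · intro x hx
        by_contra hχx
        have hmem : x ∈ tsupport χ := subset_tsupport χ (by simpa using hχx)
        exact hx ⟨csInf_le hχs.bddBelow hmem, le_csSup hχs.bddAbove hmem⟩
    · refine ⟨1, 1, one_pos, le_refl _, fun x _ => image_eq_zero_of_notMem_tsupport ?_⟩
      simp [Set.not_nonempty_iff_eq_empty.mp hne]
  have hb0 : 0 < b := lt_of_lt_of_le ha hab
  -- R with φ ≥ 2b+1 beyond R
  obtain ⟨R, hR1, hRb⟩ : ∃ R : ℝ, 1 ≤ R ∧ ∀ t, R ≤ t → 2 * b + 1 ≤ φ t := by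
    obtain ⟨R₀, hR₀⟩ := (hφtop.eventually_ge_atTop (2 * b + 1)).exists_forall_of_atTop
    exact ⟨max R₀ 1, le_max_right _ _, fun t ht => hR₀ t (le_trans (le_max_left _ _) ht)⟩
  have hR0 : (0:ℝ) < R := lt_of_lt_of_le one_pos hR1
  -- small s with φ < a on [0, s]
  obtain ⟨sa, hsa0, hsa⟩ : ∃ sa : ℝ, 0 < sa ∧ φ sa < a := by
    have h1 : ∀ᶠ t in nhds (0:ℝ), φ t < a := by
      have := hφcont.continuousAt (x := (0:ℝ))
      rw [ContinuousAt, hφ0] at this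
      exact this.eventually_lt_const ha
    obtain ⟨r, hr0, hr⟩ := Metric.eventually_nhds_iff.mp h1
    refine ⟨r / 2, by positivity, hr ?_⟩
    rw [Real.dist_eq, sub_zero, abs_of_pos (by positivity)]
    linarith
  have hg_hi : ∀ t : ℝ, R ≤ t → g t = 0 := by
    intro t ht
    refine hsupp _ fun hmem => ?_
    have := hRb t ht
    have := hmem.2
    linarith
  have hg_lo : ∀ t : ℝ, 0 ≤ t → t ≤ sa → g t = 0 := by
    intro t ht1 ht2
    refine hsupp _ fun hmem => ?_
    have h1 : φ t ≤ φ sa := hφmono ht1 ht2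
    have := hmem.1
    linarith
  -- integrability of g on Ioi 0
  have hgInt : IntegrableOn g (Set.Ioi (0:ℝ)) := by
    have h1 : IntegrableOn g (Set.Ioc 0 R) := hgcont.integrableOn_Ioc
    have h2 : IntegrableOn g (Set.Ioi R) := by
      refine (integrableOn_congr_fun (fun t ht => (hg_hi t (le_of_lt ht)).symm)
        measurableSet_Ioi).mp ?_
      · exact integrableOn_zero
    rw [← Set.Ioc_union_Ioi_eq_Ioi (le_trans zero_le_one hR1)]
    exact h1.union h2
  -- Step A: identify the limit with ∫ g over Ioi 0
  have hconst : ((d : ℝ) / (2 * C * (4 * π) ^ ((d : ℝ) / 2))) *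
      (∫ ω in Set.Ioi (0 : ℝ), ω ^ ((d : ℝ) / 2 - 1) * χ ω) = ∫ t in Set.Ioi (0:ℝ), g t := by
    set p : ℝ := (d:ℝ)/2 with hp_def
    have hp : 0 < p := by positivity
    set A : ℝ := (4*π) ^ p with hA_def
    have hA : 0 < A := Real.rpow_pos_of_pos hπ4 p
    set c : ℝ := C * A with hc_def
    have hc : 0 < c := by positivity
    have hpe : p * e = 1 := by
      rw [hp_def, he_def]; field_simp
    have key := MeasureTheory.integral_comp_rpow_Ioi_of_pos (g := fun y => g (c⁻¹ * y)) hp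
    have hpt : ∀ x : ℝ, 0 < x → g (c⁻¹ * x ^ p) = χ x := by
      intro x hx
      have hxp : 0 < x ^ p := Real.rpow_pos_of_pos hx p
      have h1 : C * (c⁻¹ * x ^ p) = A⁻¹ * x ^ p := by
        rw [hc_def]; field_simp
      have h2 : (A⁻¹ * x ^ p) ^ e = (4*π)⁻¹ * x := by
        rw [Real.mul_rpow (by positivity) (by positivity), Real.inv_rpow hA.le,
          hA_def, ← Real.rpow_mul hπ4.le, ← Real.rpow_mul hx.le, hpe, Real.rpow_one,
          Real.rpow_one]
      simp only [hg_def, hφ_def, h1, h2]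
      congr 1
      field_simp
    have hLHS : (∫ x in Set.Ioi (0:ℝ), (p * x ^ (p-1)) • (fun y => g (c⁻¹ * y)) (x ^ p))
        = p * ∫ x in Set.Ioi (0:ℝ), x ^ (p-1) * χ x := by
      rw [← MeasureTheory.integral_const_mul]
      refine setIntegral_congr_fun measurableSet_Ioi fun x hx => ?_
      simp only [smul_eq_mul]
      rw [hpt x hx]; ring
    have hRHS : (∫ y in Set.Ioi (0:ℝ), g (c⁻¹ * y)) = c * ∫ t in Set.Ioi (0:ℝ), g t := by
      rw [MeasureTheory.integral_comp_mul_left_Ioi g 0 (inv_pos.mpr hc)]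
      simp [smul_eq_mul, inv_inv]
    rw [hLHS, hRHS] at key
    rw [show (d:ℝ) / (2 * C * (4*π)^p) = p / c by rw [hc_def, hA_def, hp_def]; ring]
    rw [div_mul_eq_mul_div, key, mul_div_cancel_left₀ _ hc.ne']
  rw [hconst]
  have hχu := hχs.uniformContinuous_of_continuous hχc
  rw [Metric.tendsto_atTop]
  intro ε hε
  set η : ℝ := ε / (2 * (R + 1)) with hη_def
  have hη : 0 < η := by positivity
  obtain ⟨δ, hδ0, hδ⟩ := Metric.uniformContinuous_iff.mp hχu η hη
  have hφu := (isCompact_Icc : IsCompact (Set.Icc (0:ℝ) (R+1))).uniformContinuousOn_of_continuous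
    hφcont.continuousOn
  obtain ⟨δ₂, hδ₂0, hδ₂⟩ := Metric.uniformContinuousOn_iff.mp hφu (δ/2) (by positivity)
  have hφRpos : (0:ℝ) < φ R + 1 := by
    have := hφnonneg R hR0.le; linarith
  set θ : ℝ := min (1/2) (δ / (2 * (φ R + 1))) with hθ_def
  have hθ0 : 0 < θ := lt_min (by norm_num) (by positivity)
  have hθhalf : θ ≤ 1/2 := min_le_left _ _
  have hθδ : θ * φ R ≤ δ / 2 := by
    have h1 : θ ≤ δ / (2 * (φ R + 1)) := min_le_right _ _
    have h2 : 0 ≤ φ R := hφnonneg R hR0.le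
    have h3 : θ * φ R ≤ (δ / (2 * (φ R + 1))) * φ R :=
      mul_le_mul_of_nonneg_right h1 h2
    have h4 : (δ / (2 * (φ R + 1))) * φ R ≤ δ / 2 := by
      rw [div_mul_eq_mul_div, div_le_div_iff₀ (by positivity) (by norm_num)]
      nlinarith
    linarith
  obtain ⟨N₁, hN₁⟩ := Metric.tendsto_atTop.mp hasymp θ hθ0
  set N : ℕ := max N₁ 1 with hN_def
  have hNlam : ∀ n : ℕ, N ≤ n → |lam n - φ n| ≤ θ * φ n ∧ φ n / 2 ≤ lam n := by
    intro n hn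
    have hn1 : 1 ≤ n := le_trans (le_max_right _ _) hn
    have hnpos : (0:ℝ) < (n:ℝ) := by exact_mod_cast hn1
    have hφn : 0 < φ (n:ℝ) := hφpos hnpos
    have hdist := hN₁ n (le_trans (le_max_left _ _) hn)
    rw [Real.dist_eq] at hdist
    have hdist' : |lam n / φ (n:ℝ) - 1| < θ := hdist
    have habs : |lam n - φ (n:ℝ)| ≤ θ * φ (n:ℝ) := by
      have h1 : lam n / φ (n:ℝ) - 1 = (lam n - φ (n:ℝ)) / φ (n:ℝ) := by
        field_simp
      rw [h1, abs_div, abs_of_pos hφn, div_lt_iff₀ hφn] at hdist'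
      linarith
    refine ⟨habs, ?_⟩
    have h2 := (abs_le.mp habs).1
    have h3 : θ * φ (n:ℝ) ≤ (1/2) * φ (n:ℝ) := mul_le_mul_of_nonneg_right hθhalf hφn.le
    linarith
  refine ⟨max 1 (max (2/δ₂) (max ((N:ℝ)/sa) (max ((N:ℝ)/R) (lam N / a + 1)))),
    fun L hL => ?_⟩
  have hL1 : 1 ≤ L := le_trans (le_max_left _ _) hL
  have hL0 : 0 < L := lt_of_lt_of_le one_pos hL1
  set T : ℝ := L ^ d with hT_def
  have hT1 : 1 ≤ T := one_le_pow₀ hL1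
  have hT0 : 0 < T := lt_of_lt_of_le one_pos hT1
  have hTL : L ≤ T := le_self_pow₀ hL1 (by omega)
  have hL2 : (0:ℝ) < L ^ 2 := by positivity
  have hX : 2/δ₂ ≤ L := le_trans ((le_max_left _ _).trans (le_max_right _ _)) hL
  have hY : (N:ℝ)/sa ≤ L :=
    le_trans (((le_max_left _ _).trans (le_max_right _ _)).trans (le_max_right _ _)) hL
  have hZ : (N:ℝ)/R ≤ L :=
    le_trans ((((le_max_left _ _).trans (le_max_right _ _)).trans
      (le_max_right _ _)).trans (le_max_right _ _)) hL
  have hW : lam N / a + 1 ≤ L :=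
    le_trans ((((le_max_right _ _).trans (le_max_right _ _)).trans
      (le_max_right _ _)).trans (le_max_right _ _)) hL
  have hTδ₂ : 1/T < δ₂ := by
    have h1 : 2/δ₂ ≤ T := hX.trans hTL
    rw [div_le_iff₀ hδ₂0] at h1
    rw [div_lt_iff₀ hT0]
    nlinarith
  have hNsa : (N:ℝ) ≤ sa * T := by
    have h1 : (N:ℝ)/sa ≤ T := hY.trans hTL
    rw [div_le_iff₀ hsa0] at h1
    linarith
  have hNR : (N:ℝ) ≤ R * T := by
    have h1 : (N:ℝ)/R ≤ T := hZ.trans hTL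
    rw [div_le_iff₀ hR0] at h1
    linarith
  have hlamN : lam N < a * L ^ 2 := by
    have h1 : L ≤ L^2 := le_self_pow₀ hL1 two_ne_zero
    have h2 : lam N / a + 1 ≤ L ^ 2 := le_trans hW h1
    have h4 : a * (lam N / a + 1) ≤ a * L^2 := mul_le_mul_of_nonneg_left h2 ha.le
    have h5 : a * (lam N / a + 1) = lam N + a := by field_simp
    linarith
  have hde2 : (d:ℝ) * e = 2 := by rw [he_def]; field_simp
  have hT2 : T ^ e = L ^ 2 := by
    rw [hT_def, ← Real.rpow_natCast L d, ← Real.rpow_mul hL0.le, hde2,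
      show (2:ℝ) = ((2:ℕ):ℝ) by norm_num, Real.rpow_natCast]
  have hφdiv : ∀ n : ℕ, φ ((n:ℝ)/T) = φ (n:ℝ) / L ^ 2 := by
    intro n
    have h1 : C * ((n:ℝ)/T) = (C * (n:ℝ)) / T := by ring
    simp only [hφ_def]
    rw [h1, Real.div_rpow (by positivity) hT0.le, hT2]
    ring
  set M : ℕ := ⌈R * T⌉₊ with hM_def
  have hMRT : R * T ≤ (M:ℝ) := Nat.le_ceil _
  have hMle : (M:ℝ) < R * T + 1 := Nat.ceil_lt_add_one (by positivity)
  have hzero_hi : ∀ n : ℕ, R * T ≤ (n:ℝ) → χ (lam n / L^2) = 0 := by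
    intro n hn
    have hNn : N ≤ n := by
      have h0 : (N:ℝ) ≤ (n:ℝ) := le_trans hNR hn
      exact_mod_cast h0
    have h1 := (hNlam n hNn).2
    have h2 : R ≤ (n:ℝ)/T := by rw [le_div_iff₀ hT0]; exact hn
    have h3 : 2*b+1 ≤ φ ((n:ℝ)/T) := hRb _ h2
    rw [hφdiv n] at h3
    refine hsupp _ fun hmem => ?_
    have h4 : φ (n:ℝ) / 2 / L^2 ≤ lam n / L^2 := (div_le_div_iff_of_pos_right hL2).mpr h1
    have h5 : φ (n:ℝ) / 2 / L^2 = (φ (n:ℝ) / L^2)/2 := by ring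
    have h6 := hmem.2
    rw [h5] at h4
    linarith
  have hzlo_χ : ∀ n : ℕ, n < N → χ (lam n / L^2) = 0 := by
    intro n hn
    refine hsupp _ fun hmem => ?_
    have h1 : lam n ≤ lam N := hmono hn.le
    have h2 : lam n / L^2 < a := by
      rw [div_lt_iff₀ hL2]
      nlinarith
    have h3 := hmem.1
    linarith
  have hzlo_g : ∀ n : ℕ, n < N → ∀ t ∈ Set.Ioc ((n:ℝ)/T) (((n:ℝ)+1)/T), g t = 0 := by
    intro n hn t ht
    have h1 : (0:ℝ) < t := lt_of_le_of_lt (by positivity) ht.1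
    have hn1 : ((n:ℝ)+1) ≤ (N:ℝ) := by exact_mod_cast hn
    have h3 : ((n:ℝ)+1)/T ≤ (N:ℝ)/T := (div_le_div_iff_of_pos_right hT0).mpr hn1
    have h4 : (N:ℝ)/T ≤ sa := by rw [div_le_iff₀ hT0]; exact hNsa
    exact hg_lo t h1.le (le_trans ht.2 (le_trans h3 h4))
  have hmain : ∀ n : ℕ, N ≤ n → (n:ℝ) < R * T →
      |χ (lam n / L^2)/T - ∫ t in Set.Ioc ((n:ℝ)/T) (((n:ℝ)+1)/T), g t| ≤ η/T := by
    intro n hn hnRT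
    have hx0 : (0:ℝ) ≤ (n:ℝ)/T := by positivity
    have hxR : (n:ℝ)/T ≤ R := by rw [div_le_iff₀ hT0]; exact hnRT.le
    have hmemx : (n:ℝ)/T ∈ Set.Icc (0:ℝ) (R+1) := ⟨hx0, by linarith⟩
    have hlen : ((n:ℝ)+1)/T - (n:ℝ)/T = 1/T := by field_simp; ring
    have h1T : 1/T ≤ 1 := by rw [div_le_one hT0]; exact hT1
    have hbound : ∀ t ∈ Set.Ioc ((n:ℝ)/T) (((n:ℝ)+1)/T), |χ (lam n / L^2) - g t| ≤ η := by
      intro t ht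
      have ht0 : (n:ℝ)/T < t := ht.1
      have ht2 : t ≤ (n:ℝ)/T + 1/T := by
        have h := ht.2; linarith
      have hmemt : t ∈ Set.Icc (0:ℝ) (R+1) := ⟨le_trans hx0 ht0.le, by linarith⟩
      have hd1 : dist (lam n / L^2) (φ ((n:ℝ)/T)) ≤ δ/2 := by
        rw [Real.dist_eq, hφdiv n, div_sub_div_same, abs_div, abs_of_pos hL2]
        have h1 := (hNlam n hn).1
        have h2 : φ ((n:ℝ)/T) ≤ φ R := hφmono hx0 hxR
        rw [hφdiv n] at h2
        calc |lam n - φ (n:ℝ)| / L^2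
            ≤ (θ * φ (n:ℝ)) / L^2 := (div_le_div_iff_of_pos_right hL2).mpr h1
          _ = θ * (φ (n:ℝ) / L^2) := by ring
          _ ≤ θ * φ R := mul_le_mul_of_nonneg_left h2 hθ0.le
          _ ≤ δ/2 := hθδ
      have hd2 : dist (φ ((n:ℝ)/T)) (φ t) < δ/2 := by
        refine hδ₂ _ hmemx _ hmemt ?_
        rw [Real.dist_eq, abs_sub_comm, abs_of_nonneg (by linarith)]
        calc t - (n:ℝ)/T ≤ 1/T := by linarith
          _ < δ₂ := hTδ₂
      have hd3 : dist (lam n / L^2) (φ t) < δ :=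
        lt_of_le_of_lt (dist_triangle _ (φ ((n:ℝ)/T)) _) (by linarith)
      have h5 := hδ hd3
      rw [Real.dist_eq] at h5
      exact h5.le
    have hIoc_meas : volume (Set.Ioc ((n:ℝ)/T) (((n:ℝ)+1)/T)) = ENNReal.ofReal (1/T) := by
      rw [Real.volume_Ioc, hlen]
    have hconst_int : χ (lam n / L^2)/T
        = ∫ _t in Set.Ioc ((n:ℝ)/T) (((n:ℝ)+1)/T), χ (lam n / L^2) := by
      rw [setIntegral_const, measureReal_def, hIoc_meas, ENNReal.toReal_ofReal (by positivity), smul_eq_mul]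
      ring
    rw [hconst_int, ← MeasureTheory.integral_sub
      (integrableOn_const (μ := volume) (s := Set.Ioc ((n:ℝ)/T) (((n:ℝ)+1)/T)) (C := χ (lam n / L^2))
        (by rw [hIoc_meas]; exact ENNReal.ofReal_ne_top) enorm_ne_top)
      hgcont.integrableOn_Ioc]
    have hnorm := MeasureTheory.norm_setIntegral_le_of_norm_le_const (μ := volume)
      (s := Set.Ioc ((n:ℝ)/T) (((n:ℝ)+1)/T)) (C := η) (f := fun t => χ (lam n / L^2) - g t)
      (by rw [hIoc_meas]; exact ENNReal.ofReal_lt_top)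
      (fun t ht => by rw [Real.norm_eq_abs]; exact hbound t ht)
    rw [Real.norm_eq_abs, measureReal_def, hIoc_meas, ENNReal.toReal_ofReal (by positivity)] at hnorm
    calc |∫ t in Set.Ioc ((n:ℝ)/T) (((n:ℝ)+1)/T), (χ (lam n / L^2) - g t)|
        ≤ η * (1/T) := hnorm
      _ = η / T := by ring
  have hterm : ∀ n ∈ Finset.range M,
      |χ (lam n / L^2)/T - ∫ t in Set.Ioc ((n:ℝ)/T) (((n:ℝ)+1)/T), g t| ≤ η/T := by
    intro n hn
    rcases lt_or_ge n N with h | h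
    · rw [hzlo_χ n h, MeasureTheory.setIntegral_eq_zero_of_forall_eq_zero (hzlo_g n h)]
      simpa using le_of_lt (by positivity : (0:ℝ) < η/T)
    · exact hmain n h (Nat.lt_ceil.mp (Finset.mem_range.mp hn))
  have hts : (∑' n : ℕ, χ (lam n / L ^ 2)) = ∑ n ∈ Finset.range M, χ (lam n / L ^ 2) := by
    refine tsum_eq_sum fun n hn => ?_
    have h1 : M ≤ n := le_of_not_gt (fun h => hn (Finset.mem_range.mpr h))
    exact hzero_hi n (le_trans (Nat.le_ceil _) (by exact_mod_cast h1))
  have hMT : R ≤ (M:ℝ)/T := by rw [le_div_iff₀ hT0]; exact hMRT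
  have h0M : (0:ℝ) ≤ (M:ℝ)/T := by positivity
  have hIoi : (∫ t in Set.Ioi (0:ℝ), g t)
      = ∑ n ∈ Finset.range M, ∫ t in Set.Ioc ((n:ℝ)/T) (((n:ℝ)+1)/T), g t := by
    have hsplit : (∫ t in Set.Ioi (0:ℝ), g t) = ∫ t in Set.Ioc 0 ((M:ℝ)/T), g t := by
      have hzero : (∫ t in Set.Ioi ((M:ℝ)/T), g t) = 0 :=
        MeasureTheory.setIntegral_eq_zero_of_forall_eq_zero
          (fun t ht => hg_hi t (le_trans hMT (le_of_lt ht)))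
      rw [← Set.Ioc_union_Ioi_eq_Ioi h0M,
        MeasureTheory.setIntegral_union (Set.Ioc_disjoint_Ioi le_rfl) measurableSet_Ioi
          (hgInt.mono_set fun x hx => hx.1) (hgInt.mono_set fun x hx => lt_of_le_of_lt h0M hx),
        hzero, add_zero]
    rw [hsplit]
    have hadj := intervalIntegral.sum_integral_adjacent_intervals (μ := volume)
      (a := fun k : ℕ => (k:ℝ)/T) (n := M) (fun k _ => hgcont.intervalIntegrable _ _)
    simp only [Nat.cast_zero, zero_div, Nat.cast_add, Nat.cast_one] at hadj
    rw [← intervalIntegral.integral_of_le h0M, ← hadj]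
    refine Finset.sum_congr rfl fun k _ => ?_
    exact intervalIntegral.integral_of_le ((div_le_div_iff_of_pos_right hT0).mpr (by linarith))
  rw [Real.dist_eq, hts, hIoi, Finset.sum_div, ← Finset.sum_sub_distrib]
  calc |∑ n ∈ Finset.range M,
        (χ (lam n / L^2)/T - ∫ t in Set.Ioc ((n:ℝ)/T) (((n:ℝ)+1)/T), g t)|
      ≤ ∑ n ∈ Finset.range M,
        |χ (lam n / L^2)/T - ∫ t in Set.Ioc ((n:ℝ)/T) (((n:ℝ)+1)/T), g t| :=
        Finset.abs_sum_le_sum_abs _ _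
    _ ≤ (Finset.range M).card • (η/T) := Finset.sum_le_card_nsmul _ _ _ hterm
    _ = (M:ℝ) * (η/T) := by rw [Finset.card_range, nsmul_eq_mul]
    _ < ε := by
      have h1 : (M:ℝ) * (η/T) ≤ (R*T+1) * (η/T) :=
        mul_le_mul_of_nonneg_right hMle.le (by positivity)
      have h2 : (R*T+1) * (η/T) = η*R + η/T := by field_simp
      have h3 : η/T ≤ η := by
        rw [div_le_iff₀ hT0]; exact le_mul_of_one_le_right hη.le hT1
      have hR1' : R + 1 ≠ 0 := by positivity
      have h5 : η*(R+1) = ε/2 := by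
        rw [hη_def]; field_simp
      linarith only [h1, h2, h3, h5, hε]
end

section
/- (sinc² approximation of the Dirac delta) For every continuous compactly supported φ : ℝ → ℝ, one has (1/(2πt)) ∫_ℝ (sin(tΩ/2))²/(Ω/2)² φ(Ω) dΩ → φ(0) as t → ∞. -/
open MeasureTheory Real Filter

section Aux
open Set

lemma sinc_sq_nonneg (x : ℝ) : 0 ≤ Real.sin x ^ 2 / x ^ 2 :=
  div_nonneg (sq_nonneg _) (sq_nonneg _)

lemma sinc_sq_le_one (x : ℝ) : Real.sin x ^ 2 / x ^ 2 ≤ 1 := by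
  rcases eq_or_ne x 0 with rfl | hx
  · simp
  · exact div_le_one_of_le₀ (Real.sin_sq_le_sq) (sq_nonneg _)

lemma integrableOn_sinc_sq_Ici : IntegrableOn (fun x : ℝ => Real.sin x ^ 2 / x ^ 2) (Ici 0) := by
  have hmeas : AEStronglyMeasurable (fun x : ℝ => Real.sin x ^ 2 / x ^ 2) volume :=
    (((Real.measurable_sin.pow_const 2).div (measurable_id.pow_const 2))).aestronglyMeasurable
  have h1 : IntegrableOn (fun x : ℝ => Real.sin x ^ 2 / x ^ 2) (Icc 0 1) := by
    refine Measure.integrableOn_of_bounded (M := 1) (by simp) hmeas ?_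
    filter_upwards with x
    rw [Real.norm_eq_abs, abs_of_nonneg (sinc_sq_nonneg x)]
    exact sinc_sq_le_one x
  have h2 : IntegrableOn (fun x : ℝ => Real.sin x ^ 2 / x ^ 2) (Ioi 1) := by
    have hint : IntegrableOn (fun x : ℝ => x ^ (-2 : ℝ)) (Ioi 1) :=
      integrableOn_Ioi_rpow_of_lt (by norm_num) one_pos
    refine Integrable.mono hint hmeas.restrict ?_
    filter_upwards [ae_restrict_mem measurableSet_Ioi] with x hx
    have hx1 : (1:ℝ) ≤ x := le_of_lt hx
    rw [Real.norm_eq_abs, Real.norm_eq_abs, abs_of_nonneg (sinc_sq_nonneg x),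
      abs_of_nonneg (Real.rpow_nonneg (by linarith) _)]
    rw [Real.rpow_neg (by linarith), show ((2:ℝ)) = ((2:ℕ):ℝ) by norm_num, Real.rpow_natCast]
    rw [div_eq_mul_inv]
    have : Real.sin x ^ 2 ≤ 1 := Real.sin_sq_le_one x
    calc Real.sin x ^ 2 * (x ^ 2)⁻¹ ≤ 1 * (x ^ 2)⁻¹ := by
          exact mul_le_mul_of_nonneg_right this (by positivity)
      _ = (x ^ 2)⁻¹ := one_mul _
  have := h1.union h2
  refine this.mono_set fun x hx => ?_
  rcases le_or_gt x 1 with h | h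
  · exact Or.inl ⟨hx, h⟩
  · exact Or.inr h

lemma integrable_sinc_sq : Integrable (fun x : ℝ => Real.sin x ^ 2 / x ^ 2) := by
  have hpos := integrableOn_sinc_sq_Ici
  have hneg : IntegrableOn (fun x : ℝ => Real.sin x ^ 2 / x ^ 2) (Iic 0) := by
    have h1 : Integrable (fun x : ℝ => indicator (Ici 0) (fun y : ℝ => Real.sin y ^ 2 / y ^ 2) (-x)) :=
      (hpos.integrable_indicator measurableSet_Ici).comp_neg
    refine (h1.integrableOn).congr_fun ?_ measurableSet_Iic
    intro x hx
    show indicator (Ici 0) (fun y : ℝ => Real.sin y ^ 2 / y ^ 2) (-x) = _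
    rw [indicator_of_mem (by simpa using hx : -x ∈ Ici (0:ℝ))]
    simp
  rw [← integrableOn_univ]
  have : (univ : Set ℝ) = Iic 0 ∪ Ici 0 := by
    ext x; simp only [mem_univ, mem_union, mem_Iic, mem_Ici, true_iff]; exact le_total x 0
  rw [this]
  exact hneg.union hpos

lemma integrableOn_sin_sq_exp {u : ℝ} (hu : 0 < u) :
    IntegrableOn (fun x : ℝ => Real.sin x ^ 2 * Real.exp (-(u * x))) (Ioi 0) := by
  refine Integrable.mono (exp_neg_integrableOn_Ioi 0 hu)
    (((Real.measurable_sin.pow_const 2).mul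
      (Real.measurable_exp.comp (measurable_const.mul measurable_id).neg)).aestronglyMeasurable) ?_
  filter_upwards with x
  rw [Real.norm_eq_abs, Real.norm_eq_abs, abs_mul, Real.abs_exp, neg_mul, Real.abs_exp]
  have h1 : |Real.sin x ^ 2| ≤ 1 := by
    rw [abs_of_nonneg (sq_nonneg _)]; exact Real.sin_sq_le_one x
  calc |Real.sin x ^ 2| * Real.exp (-(u * x)) ≤ 1 * Real.exp (-(u * x)) :=
        mul_le_mul_of_nonneg_right h1 (Real.exp_nonneg _)
    _ = Real.exp (-(u * x)) := one_mul _

lemma integral_sin_sq_exp {u : ℝ} (hu : 0 < u) :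
    ∫ x in Ioi (0:ℝ), Real.sin x ^ 2 * Real.exp (-(u * x)) = 2 / (u * (u ^ 2 + 4)) := by
  have hu4 : u ^ 2 + 4 ≠ 0 := by positivity
  set F : ℝ → ℝ := fun x => Real.exp (-(u * x)) *
    (-(1 / (2 * u)) - (2 * Real.sin (2 * x) - u * Real.cos (2 * x)) / (2 * (u ^ 2 + 4))) with hFdef
  have hF : ∀ x ∈ Ici (0:ℝ), HasDerivAt F (Real.sin x ^ 2 * Real.exp (-(u * x))) x := by
    intro x _
    have he : HasDerivAt (fun x : ℝ => Real.exp (-(u * x))) (-u * Real.exp (-(u * x))) x := by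
      have h0 : HasDerivAt (fun x : ℝ => -(u * x)) (-u) x := by
        exact ((hasDerivAt_id x).const_mul u).neg.congr_deriv (by simp)
      simpa [mul_comm] using h0.exp
    have h2x : HasDerivAt (fun x : ℝ => 2 * x) 2 x := by
      simpa using (hasDerivAt_id x).const_mul 2
    have hsin : HasDerivAt (fun x : ℝ => Real.sin (2 * x)) (Real.cos (2 * x) * 2) x :=
      (Real.hasDerivAt_sin (2 * x)).comp x h2x
    have hcos : HasDerivAt (fun x : ℝ => Real.cos (2 * x)) (-Real.sin (2 * x) * 2) x :=
      (Real.hasDerivAt_cos (2 * x)).comp x h2x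
    have hG : HasDerivAt (fun x : ℝ => -(1 / (2 * u)) -
        (2 * Real.sin (2 * x) - u * Real.cos (2 * x)) / (2 * (u ^ 2 + 4)))
        (-(((2 * (Real.cos (2 * x) * 2)) - u * (-Real.sin (2 * x) * 2)) / (2 * (u ^ 2 + 4)))) x := by
      exact (((hsin.const_mul 2).sub (hcos.const_mul u)).div_const _).const_sub _
    have := he.mul hG
    refine this.congr_deriv ?_
    have hsq : Real.sin x ^ 2 = 1 - Real.cos x ^ 2 := Real.sin_sq x
    rw [hsq, Real.cos_two_mul, Real.sin_two_mul]
    field_simp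
    ring
  have htend : Tendsto F atTop (nhds 0) := by
    have hC : Tendsto (fun x : ℝ => (1 / (2 * u) + (2 + u) / (2 * (u ^ 2 + 4))) *
        Real.exp (-u * x)) atTop (nhds 0) := by
      have := Real.tendsto_exp_atBot.comp (tendsto_id.const_mul_atTop_of_neg
        (neg_neg_iff_pos.2 hu))
      have h2 := this.const_mul (1 / (2 * u) + (2 + u) / (2 * (u ^ 2 + 4)))
      simpa using h2
    refine squeeze_zero_norm (fun x => ?_) hC
    rw [hFdef]
    simp only [Real.norm_eq_abs, abs_mul, Real.abs_exp]
    rw [neg_mul]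
    rw [mul_comm (Real.exp _)]
    refine mul_le_mul_of_nonneg_right ?_ (Real.exp_nonneg _)
    have hs : |Real.sin (2 * x)| ≤ 1 := Real.abs_sin_le_one _
    have hc : |Real.cos (2 * x)| ≤ 1 := Real.abs_cos_le_one _
    have h1 : |2 * Real.sin (2 * x) - u * Real.cos (2 * x)| ≤ 2 + u := by
      calc |2 * Real.sin (2 * x) - u * Real.cos (2 * x)|
          ≤ |2 * Real.sin (2 * x)| + |u * Real.cos (2 * x)| := abs_sub _ _
        _ ≤ 2 + u := by
            rw [abs_mul, abs_mul, abs_of_nonneg (by norm_num : (0:ℝ) ≤ 2), abs_of_nonneg hu.le]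
            nlinarith [hs, hc, hu.le]
    calc |(-(1 / (2 * u)) - (2 * Real.sin (2 * x) - u * Real.cos (2 * x)) / (2 * (u ^ 2 + 4)))|
        ≤ |(-(1 / (2 * u)))| + |(2 * Real.sin (2 * x) - u * Real.cos (2 * x)) / (2 * (u ^ 2 + 4))| :=
          abs_sub _ _
      _ ≤ 1 / (2 * u) + (2 + u) / (2 * (u ^ 2 + 4)) := by
          have e1 : |(-(1 / (2 * u)))| = 1 / (2 * u) := by
            rw [abs_neg, abs_of_nonneg (by positivity : (0:ℝ) ≤ 1 / (2 * u))]
          have e2 : |(2 * Real.sin (2 * x) - u * Real.cos (2 * x)) / (2 * (u ^ 2 + 4))|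
              ≤ (2 + u) / (2 * (u ^ 2 + 4)) := by
            rw [abs_div, abs_of_nonneg (by positivity : (0:ℝ) ≤ 2 * (u ^ 2 + 4))]
            gcongr
          linarith
  have := integral_Ioi_of_hasDerivAt_of_tendsto' (fun x hx => hF x hx)
    (integrableOn_sin_sq_exp hu) htend
  rw [this, hFdef]
  simp only [mul_zero, neg_zero, Real.exp_zero, Real.sin_zero, Real.cos_zero, one_mul]
  field_simp
  ring

lemma integrableOn_id_mul_exp {x : ℝ} (hx : 0 < x) :
    IntegrableOn (fun u : ℝ => u * Real.exp (-(x * u))) (Ioi 0) := by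
  have h := integrableOn_rpow_mul_exp_neg_mul_rpow (p := 1) (s := 1) (b := x)
    (by norm_num) one_pos hx
  refine h.congr_fun (fun u hu => ?_) measurableSet_Ioi
  simp [neg_mul]

lemma integral_id_mul_exp {x : ℝ} (hx : 0 < x) :
    ∫ u in Ioi (0:ℝ), u * Real.exp (-(x * u)) = 1 / x ^ 2 := by
  have h : ∫ u in Ioi (0:ℝ), u * Real.exp (-(x * u))
      = ∫ u in Ioi (0:ℝ), u ^ ((2:ℝ) - 1) * Real.exp (-(x * u)) := by
    refine setIntegral_congr_fun measurableSet_Ioi (fun u hu => ?_)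
    norm_num
  rw [h, Real.integral_rpow_mul_exp_neg_mul_Ioi two_pos hx, Real.Gamma_two]
  rw [mul_one, show ((2:ℝ)) = ((2:ℕ):ℝ) by norm_num, Real.rpow_natCast]
  rw [div_pow, one_pow]

lemma integrableOn_two_div_sq_add_four :
    IntegrableOn (fun u : ℝ => 2 / (u ^ 2 + 4)) (Ioi 0) := by
  have h : Integrable (fun u : ℝ => (1 + u ^ 2)⁻¹) := integrable_inv_one_add_sq
  have h2 : Integrable (fun u : ℝ => (1 + (u / 2) ^ 2)⁻¹) := by
    have := h.comp_div (R := 2) (by norm_num)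
    simpa using this
  refine ((h2.const_mul (1/2)).integrableOn).congr_fun (fun u _ => ?_) measurableSet_Ioi
  field_simp
  ring

lemma integral_two_div_sq_add_four :
    ∫ u in Ioi (0:ℝ), 2 / (u ^ 2 + 4) = π / 2 := by
  have hF : ∀ u ∈ Ici (0:ℝ), HasDerivAt (fun u : ℝ => Real.arctan (u / 2))
      (2 / (u ^ 2 + 4)) u := by
    intro u _
    have h1 : HasDerivAt (fun u : ℝ => u / 2) (1 / 2) u := by
      simpa using (hasDerivAt_id u).div_const 2
    have := (Real.hasDerivAt_arctan (u / 2)).comp u h1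
    refine this.congr_deriv ?_
    rw [div_pow]
    field_simp
    ring
  have htend : Tendsto (fun u : ℝ => Real.arctan (u / 2)) atTop (nhds (π / 2)) := by
    have h1 : Tendsto (fun u : ℝ => u / 2) atTop atTop := tendsto_id.atTop_div_const two_pos
    exact (Real.tendsto_arctan_atTop.mono_right nhdsWithin_le_nhds).comp h1
  have := integral_Ioi_of_hasDerivAt_of_tendsto' hF integrableOn_two_div_sq_add_four htend
  rw [this]
  simp

lemma integral_sinc_sq_Ioi :
    ∫ x in Ioi (0:ℝ), Real.sin x ^ 2 / x ^ 2 = π / 2 := by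
  set μ : Measure ℝ := volume.restrict (Ioi 0) with hμ
  set f : ℝ → ℝ → ℝ := fun u x => u * (Real.sin x ^ 2 * Real.exp (-(u * x))) with hf
  have hk_cont : Continuous (Function.uncurry f) := by
    apply Continuous.mul continuous_fst
    exact ((Real.continuous_sin.comp continuous_snd).pow 2).mul
      (((continuous_fst.mul continuous_snd).neg).rexp)
  have hk_meas : AEStronglyMeasurable (Function.uncurry f) (μ.prod μ) :=
    hk_cont.aestronglyMeasurable
  have h1 : ∀ᵐ u ∂μ, Integrable (fun x => f u x) μ := by
    filter_upwards [ae_restrict_mem measurableSet_Ioi] with u hu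
    exact ((integrableOn_sin_sq_exp hu).const_mul u)
  have h2 : Integrable (fun u => ∫ x, ‖f u x‖ ∂μ) μ := by
    refine integrableOn_two_div_sq_add_four.congr ?_
    rw [EventuallyEq, ae_restrict_iff' measurableSet_Ioi]
    filter_upwards with u hu
    have hnorm : ∀ x, x ∈ Ioi (0:ℝ) → ‖f u x‖ = f u x := by
      intro x _
      rw [Real.norm_eq_abs, abs_of_nonneg]
      have hu' : (0:ℝ) < u := hu
      have := Real.exp_nonneg (-(u * x))
      positivity
    rw [hμ]
    rw [setIntegral_congr_fun measurableSet_Ioi hnorm]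
    rw [hf]
    simp only
    rw [integral_const_mul, integral_sin_sq_exp hu]
    have hu' : (0:ℝ) < u := hu
    have h4 : u ^ 2 + 4 ≠ 0 := by positivity
    have hu0 : u ≠ 0 := ne_of_gt hu'
    field_simp
  have hint : Integrable (Function.uncurry f) (μ.prod μ) :=
    (integrable_prod_iff hk_meas).2 ⟨h1, h2⟩
  have hswap := integral_integral_swap hint
  -- LHS : ∫ u, ∫ x, f u x = π / 2
  have hLHS : (∫ u, ∫ x, f u x ∂μ ∂μ) = π / 2 := by
    rw [← integral_two_div_sq_add_four, hμ]
    refine setIntegral_congr_fun measurableSet_Ioi (fun u hu => ?_)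
    have hu : (0:ℝ) < u := hu
    rw [integral_const_mul, integral_sin_sq_exp hu]
    have h4 : u ^ 2 + 4 ≠ 0 := by positivity
    have hu0 : u ≠ 0 := ne_of_gt hu
    field_simp
  -- RHS : ∫ x, ∫ u, f u x = ∫ sinc²
  have hRHS : (∫ x, ∫ u, f u x ∂μ ∂μ) = ∫ x in Ioi (0:ℝ), Real.sin x ^ 2 / x ^ 2 := by
    rw [hμ]
    refine setIntegral_congr_fun measurableSet_Ioi (fun x hx => ?_)
    have hx : (0:ℝ) < x := hx
    have : (fun u => f u x) = fun u => Real.sin x ^ 2 * (u * Real.exp (-(x * u))) := by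
      funext u
      rw [hf]
      simp only
      rw [mul_comm u x]
      ring
    rw [this, integral_const_mul, integral_id_mul_exp hx]
    rw [mul_one_div]
  rw [← hRHS, ← hswap, hLHS]

lemma integral_sinc_sq : ∫ x : ℝ, Real.sin x ^ 2 / x ^ 2 = π := by
  have hint := integrable_sinc_sq
  have hsplit := intervalIntegral.integral_Iic_add_Ioi (b := (0:ℝ))
    (hint.integrableOn) (hint.integrableOn)
  have hneg : ∫ x in Iic (0:ℝ), Real.sin x ^ 2 / x ^ 2
      = ∫ x in Ioi (0:ℝ), Real.sin x ^ 2 / x ^ 2 := by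
    have : ∀ x ∈ Iic (0:ℝ), Real.sin x ^ 2 / x ^ 2
        = (fun y => Real.sin y ^ 2 / y ^ 2) (-x) := by
      intro x _; simp
    rw [setIntegral_congr_fun measurableSet_Iic this]
    have h2 := integral_comp_neg_Iic (0:ℝ) (fun y => Real.sin y ^ 2 / y ^ 2)
    rw [h2]
    norm_num
  rw [← hsplit, hneg, integral_sinc_sq_Ioi]
  ring


lemma sinc_sq_nonneg' (x : ℝ) : 0 ≤ Real.sin x ^ 2 / x ^ 2 :=
  div_nonneg (sq_nonneg _) (sq_nonneg _)

lemma tendsto_sinc_sq_integral (φ : ℝ → ℝ) (hφc : Continuous φ) (hφs : HasCompactSupport φ) :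
    Tendsto (fun t : ℝ => ∫ s : ℝ, Real.sin s ^ 2 / s ^ 2 * φ (2 * s / t))
      atTop (nhds (π * φ 0)) := by
  obtain ⟨C, hC⟩ := hφs.exists_bound_of_continuous hφc
  have hmeas : ∀ t : ℝ, AEStronglyMeasurable
      (fun s : ℝ => Real.sin s ^ 2 / s ^ 2 * φ (2 * s / t)) volume := by
    intro t
    exact (((Real.measurable_sin.pow_const 2).div (measurable_id.pow_const 2)).mul
      ((hφc.measurable).comp ((measurable_id.const_mul 2).div_const t))).aestronglyMeasurable
  have hπφ : π * φ 0 = ∫ s : ℝ, Real.sin s ^ 2 / s ^ 2 * φ 0 := by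
    rw [integral_mul_const, integral_sinc_sq]
  rw [hπφ]
  refine tendsto_integral_filter_of_dominated_convergence
    (fun s => Real.sin s ^ 2 / s ^ 2 * C) ?_ ?_ ?_ ?_
  · filter_upwards with t using hmeas t
  · filter_upwards with t
    filter_upwards with s
    rw [Real.norm_eq_abs, abs_mul, abs_of_nonneg (sinc_sq_nonneg' s)]
    exact mul_le_mul_of_nonneg_left (by simpa using hC (2 * s / t)) (sinc_sq_nonneg' s)
  · exact integrable_sinc_sq.mul_const C
  · filter_upwards with s
    refine Tendsto.const_mul _ (hφc.continuousAt.tendsto.comp ?_)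
    have h1 : Tendsto (fun t : ℝ => (2 * s) * t⁻¹) atTop (nhds 0) := by
      simpa using tendsto_inv_atTop_zero.const_mul (2 * s)
    exact h1.congr (fun t => (div_eq_mul_inv _ _).symm)

/-- sinc² approximation of the Dirac delta: for every continuous compactly
supported `φ : ℝ → ℝ`,
`(1/(2πt)) ∫_ℝ sin(tΩ/2)²/(Ω/2)² φ(Ω) dΩ → φ(0)` as `t → ∞`. -/
theorem sinc_sq_delta (φ : ℝ → ℝ) (hφc : Continuous φ) (hφs : HasCompactSupport φ) :
    Tendsto (fun t : ℝ =>
        (1 / (2 * π * t)) * ∫ Ω : ℝ, (Real.sin (t * Ω / 2)) ^ 2 / (Ω / 2) ^ 2 * φ Ω)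
      atTop (nhds (φ 0)) := by
  have hπ : π ≠ 0 := Real.pi_ne_zero
  have hmain := (tendsto_sinc_sq_integral φ hφc hφs).const_mul (1 / π)
  have hlim : (1 / π) * (π * φ 0) = φ 0 := by field_simp
  rw [hlim] at hmain
  refine hmain.congr' ?_
  filter_upwards [eventually_gt_atTop (0:ℝ)] with t ht
  have ht0 : t ≠ 0 := ne_of_gt ht
  have h1 := Measure.integral_comp_mul_left
    (fun Ω : ℝ => (Real.sin (t * Ω / 2)) ^ 2 / (Ω / 2) ^ 2 * φ Ω) (2 / t)
  have h2 : (fun x : ℝ => (Real.sin (t * ((2 / t) * x) / 2)) ^ 2 / (((2 / t) * x) / 2) ^ 2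
      * φ ((2 / t) * x)) = fun x : ℝ => t ^ 2 * (Real.sin x ^ 2 / x ^ 2 * φ (2 * x / t)) := by
    funext x
    have harg : t * ((2 / t) * x) / 2 = x := by field_simp
    have harg2 : ((2 / t) * x) / 2 = x / t := by field_simp
    have harg3 : (2 / t) * x = 2 * x / t := by ring
    rw [harg, harg2, harg3]
    rcases eq_or_ne x 0 with rfl | hx
    · simp
    · rw [div_pow]
      field_simp
  rw [h2] at h1
  rw [integral_const_mul] at h1
  have habs : |((2 : ℝ) / t)⁻¹| = t / 2 := by
    rw [abs_of_nonneg] <;> [skip; positivity]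
    field_simp
  rw [habs, smul_eq_mul] at h1
  set H := ∫ x : ℝ, Real.sin x ^ 2 / x ^ 2 * φ (2 * x / t) with hH
  set G := ∫ Ω : ℝ, (Real.sin (t * Ω / 2)) ^ 2 / (Ω / 2) ^ 2 * φ Ω with hG
  -- h1 : t ^ 2 * H = (t/2) * G
  have ht2 : t / 2 ≠ 0 := by positivity
  have h3 : G = 2 * t * H := by
    have h4 : G = (t / 2)⁻¹ * (t ^ 2 * H) := by
      rw [h1]
      field_simp
    rw [h4]
    field_simp
  show 1 / π * H = 1 / (2 * π * t) * G
  rw [h3]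
  field_simp

end Aux
end
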